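/- Let p be an odd prime and q = p^2. For k ≥ 0, σ**(x^{2k+1}) splits over F_q (is a product of linear factors) if and only if 2k+1 = N·p^n − 1 for some divisor N of p^2 − 1 and some n ∈ ℕ. -/

import Mathlib

open Polynomial

variable {F : Type*} [Field F]

/-- `D` is a (monic) unitary divisor of `S`: `D ∣ S` and `gcd(D, S/D) = 1`. -/
def IsUnitaryDivisor (D S : Polynomial F) : Prop :=
  D.Monic ∧ D ∣ S ∧ IsCoprime D (S / D)

/-- `D` is a (monic) bi-unitary divisor of `S`: `gcd_u(D, S/D) = 1`, i.e. the only common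
monic unitary divisor of `D` and `S/D` is `1`. -/
def IsBiunitaryDivisor (D S : Polynomial F) : Prop :=
  D.Monic ∧ D ∣ S ∧
    ∀ G : Polynomial F, IsUnitaryDivisor G D → IsUnitaryDivisor G (S / D) → G = 1

/-- `σ(S)`: the sum of all monic divisors of `S`. -/
noncomputable def sigma' (S : Polynomial F) : Polynomial F :=
  ∑ᶠ D ∈ {D : Polynomial F | D.Monic ∧ D ∣ S}, D

/-- `σ**(S)`: the sum of all monic bi-unitary divisors of `S`. -/
noncomputable def sigmaStarStar (S : Polynomial F) : Polynomial F :=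
  ∑ᶠ D ∈ {D : Polynomial F | IsBiunitaryDivisor D S}, D

/-- `S` is bi-unitary perfect: `σ**(S) = S`. -/
def IsBUP (S : Polynomial F) : Prop := sigmaStarStar S = S

section MyAux

open scoped Classical

lemma my_monic_dvd_X_pow {D : Polynomial F} {m : ℕ} (hD : D.Monic) (h : D ∣ X ^ m) :
    ∃ a, a ≤ m ∧ D = X ^ a := by
  obtain ⟨i, him, hass⟩ := (dvd_prime_pow Polynomial.prime_X m).mp h
  exact ⟨i, him, Polynomial.eq_of_monic_of_associated hD (monic_X_pow i) hass⟩

lemma my_X_pow_div {a b : ℕ} (hba : b ≤ a) :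
    (X ^ a : Polynomial F) / X ^ b = X ^ (a - b) := by
  have h1 : (X ^ a : Polynomial F) = X ^ b * X ^ (a - b) := by
    rw [← pow_add, Nat.add_sub_cancel' hba]
  rw [h1, mul_div_cancel_left₀ _ (pow_ne_zero _ Polynomial.X_ne_zero)]

lemma my_unitary_X_pow {G : Polynomial F} {a : ℕ}
    (h : IsUnitaryDivisor G (X ^ a : Polynomial F)) : G = 1 ∨ G = X ^ a := by
  obtain ⟨hM, hdvd, hcop⟩ := h
  obtain ⟨b, hba, rfl⟩ := my_monic_dvd_X_pow hM hdvd
  rcases Nat.eq_zero_or_pos b with rfl | hb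
  · left; simp
  rcases eq_or_lt_of_le hba with rfl | hlt
  · right; rfl
  exfalso
  rw [my_X_pow_div hba] at hcop
  have hX1 : (X : Polynomial F) ∣ X ^ b := dvd_pow_self X hb.ne'
  have hX2 : (X : Polynomial F) ∣ X ^ (a - b) :=
    dvd_pow_self X (Nat.sub_ne_zero_of_lt hlt)
  have : IsUnit (X : Polynomial F) := hcop.isUnit_of_dvd' hX1 hX2
  exact Polynomial.not_isUnit_X this

lemma X_pow_injective : Function.Injective fun a : ℕ => (X : Polynomial F) ^ a := by
  intro a b h
  have := congrArg natDegree h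
  simpa [natDegree_X_pow] using this

lemma sigmaStarStar_X_pow_odd {m : ℕ} (hm : Odd m) :
    sigmaStarStar (X ^ m : Polynomial F) = ∑ a ∈ Finset.range (m + 1), X ^ a := by
  have hset : {D : Polynomial F | IsBiunitaryDivisor D (X ^ m)} =
      ↑((Finset.range (m + 1)).image fun a => (X : Polynomial F) ^ a) := by
    ext D
    simp only [Set.mem_setOf_eq, Finset.coe_image, Set.mem_image, Finset.mem_coe,
      Finset.mem_range]
    constructor
    · rintro ⟨hM, hdvd, -⟩
      obtain ⟨a, ham, rfl⟩ := my_monic_dvd_X_pow hM hdvd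
      exact ⟨a, Nat.lt_succ_of_le ham, rfl⟩
    · rintro ⟨a, ha, rfl⟩
      have ham : a ≤ m := Nat.lt_succ_iff.mp ha
      refine ⟨monic_X_pow a, pow_dvd_pow X ham, fun G hG1 hG2 => ?_⟩
      rw [my_X_pow_div ham] at hG2
      rcases my_unitary_X_pow hG1 with rfl | rfl
      · rfl
      rcases my_unitary_X_pow hG2 with h1 | h2
      · exact h1
      · exfalso
        have hab : a = m - a := X_pow_injective h2
        have : m = 2 * a := by omega
        rw [this] at hm
        exact (Nat.not_odd_iff_even.mpr ⟨a, by ring⟩) hm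
  rw [sigmaStarStar, hset, finsum_mem_coe_finset]
  exact Finset.sum_image fun x _ y _ h => X_pow_injective h

lemma geom_splits_iff {n : ℕ} (hn : n ≠ 0) :
    (∑ a ∈ Finset.range n, (X : Polynomial F) ^ a).Splits ↔
      ((X : Polynomial F) ^ n - C 1).Splits := by
  have hmul : (∑ a ∈ Finset.range n, (X : Polynomial F) ^ a) * (X - C 1) =
      X ^ n - C 1 := by
    rw [map_one]; exact geom_sum_mul X n
  constructor
  · intro h
    rw [← hmul]
    exact Splits.mul h (Splits.X_sub_C _)
  · intro h
    rw [← hmul] at h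
    exact (Splits.of_dvd h (by
      rw [hmul]; exact X_pow_sub_C_ne_zero (Nat.pos_of_ne_zero hn) 1) (dvd_mul_right _ _))

lemma dvd_card_sub_one_of_splits [Fintype F] {p N : ℕ} [CharP F p] [hp : Fact p.Prime]
    (hpN : ¬ p ∣ N) (hN0 : N ≠ 0)
    (h : ((X : Polynomial F) ^ N - C 1).Splits) :
    N ∣ Fintype.card F - 1 := by
  set f := (X : Polynomial F) ^ N - C 1 with hf
  have hf0 : f ≠ 0 := X_pow_sub_C_ne_zero (Nat.pos_of_ne_zero hN0) 1
  have hsep : f.Separable := by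
    refine separable_X_pow_sub_C 1 ?_ one_ne_zero
    rwa [Ne, CharP.cast_eq_zero_iff F p N]
  have hdeg : f.natDegree = N := natDegree_X_pow_sub_C
  have hcard : Multiset.card f.roots = N := by
    rw [splits_iff_card_roots.mp h, hdeg]
  have hnodup : f.roots.Nodup := nodup_roots hsep
  set g := Nat.gcd N (Fintype.card F - 1) with hg
  have hg0 : g ≠ 0 := fun h0 => hN0 (Nat.eq_zero_of_gcd_eq_zero_left h0)
  -- every root of f is a root of X^g - 1
  have hsub : f.roots.toFinset ⊆ ((X : Polynomial F) ^ g - C 1).roots.toFinset := by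
    intro x hx
    rw [Multiset.mem_toFinset, mem_roots hf0] at hx
    have hxN : x ^ N = 1 := by
      have h' := hx
      simp only [hf, IsRoot.def, eval_sub, eval_pow, eval_X, eval_C] at h'
      exact sub_eq_zero.mp h'
    have hx0 : x ≠ 0 := by
      rintro rfl
      rw [zero_pow hN0] at hxN
      exact zero_ne_one hxN
    have h1 : orderOf x ∣ N := orderOf_dvd_of_pow_eq_one hxN
    have h2 : orderOf x ∣ Fintype.card F - 1 :=
      orderOf_dvd_of_pow_eq_one (FiniteField.pow_card_sub_one_eq_one x hx0)
    have hxg : x ^ g = 1 := orderOf_dvd_iff_pow_eq_one.mp (Nat.dvd_gcd h1 h2)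
    rw [Multiset.mem_toFinset,
      mem_roots (X_pow_sub_C_ne_zero (Nat.pos_of_ne_zero hg0) 1)]
    simp [IsRoot.def, hxg]
  have hle : N ≤ g := by
    have h1 : f.roots.toFinset.card = N := by
      rw [Multiset.toFinset_card_of_nodup hnodup, hcard]
    calc N = f.roots.toFinset.card := h1.symm
      _ ≤ ((X : Polynomial F) ^ g - C 1).roots.toFinset.card := Finset.card_le_card hsub
      _ ≤ Multiset.card ((X : Polynomial F) ^ g - C 1).roots := Multiset.toFinset_card_le _
      _ ≤ ((X : Polynomial F) ^ g - C 1).natDegree := card_roots' _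
      _ = g := natDegree_X_pow_sub_C
  have hgN : g = N :=
    le_antisymm (Nat.le_of_dvd (Nat.pos_of_ne_zero hN0) (Nat.gcd_dvd_left _ _)) hle
  exact hgN ▸ Nat.gcd_dvd_right N (Fintype.card F - 1)

lemma splits_X_pow_sub_one_of_dvd [Fintype F] {N : ℕ} (hN0 : N ≠ 0)
    (h : N ∣ Fintype.card F - 1) :
    ((X : Polynomial F) ^ N - C 1).Splits := by
  obtain ⟨g, hg⟩ := IsCyclic.exists_generator (α := Fˣ)
  have hord : orderOf g = Fintype.card F - 1 := by
    rw [orderOf_eq_card_of_forall_mem_zpowers hg, Nat.card_eq_fintype_card,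
      Fintype.card_units]
  obtain ⟨t, ht⟩ := h
  have ht0 : t ≠ 0 := by
    rintro rfl
    rw [mul_zero] at ht
    have : 1 < Fintype.card F := Fintype.one_lt_card
    omega
  have hordt : orderOf (g ^ t) = N := by
    rw [orderOf_pow_of_dvd ht0 (by rw [hord, ht]; exact Dvd.intro_left N rfl), hord, ht,
      Nat.mul_div_cancel _ (Nat.pos_of_ne_zero ht0)]
  have hprim : IsPrimitiveRoot (g ^ t) N := hordt ▸ IsPrimitiveRoot.orderOf (g ^ t)
  have hprim' : IsPrimitiveRoot ((g ^ t : Fˣ) : F) N := IsPrimitiveRoot.coe_units_iff.mpr hprim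
  exact X_pow_sub_one_splits hprim'

end MyAux

theorem stmt8 (p : ℕ) [Fact p.Prime] (hp : Odd p) (k : ℕ) :
    (sigmaStarStar (X ^ (2 * k + 1) : Polynomial (GaloisField p 2))).Splits ↔
      ∃ N n : ℕ, N ∣ (p ^ 2 - 1) ∧ 2 * k + 1 = N * p ^ n - 1 := by
  letI : Fintype (GaloisField p 2) := Fintype.ofFinite _
  set F := GaloisField p 2
  have hcardF : Fintype.card F = p ^ 2 := by
    rw [← Nat.card_eq_fintype_card]
    exact GaloisField.card p 2 two_ne_zero
  have hp2 : 2 ≤ p := (Fact.out : p.Prime).two_le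
  have hm : Odd (2 * k + 1) := ⟨k, by ring⟩
  rw [sigmaStarStar_X_pow_odd hm]
  have h21 : 2 * k + 1 + 1 = 2 * k + 2 := rfl
  rw [h21, geom_splits_iff (by omega)]
  constructor
  · intro h
    set M := 2 * k + 2 with hM
    have hM0 : M ≠ 0 := by omega
    set e := M.factorization p with he
    set N := M / p ^ e with hN
    have hNe : p ^ e * N = M := Nat.ordProj_mul_ordCompl_eq_self M p
    have hpN : ¬ p ∣ N := Nat.not_dvd_ordCompl Fact.out hM0
    have hN0 : N ≠ 0 := by
      intro h0; rw [h0, mul_zero] at hNe; omega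
    have hdvd : ((X : Polynomial F) ^ N - C 1) ∣ (X ^ M - C 1) := by
      have hNdvd : N ∣ M := Nat.ordCompl_dvd M p
      obtain ⟨t, ht⟩ := hNdvd
      have hd := sub_dvd_pow_sub_pow ((X : Polynomial F) ^ N) (C 1) t
      rw [← pow_mul, ← ht] at hd
      simpa using hd
    have hsplN := Splits.of_dvd h
      (X_pow_sub_C_ne_zero (by omega : 0 < M) (1 : F)) hdvd
    have hNdvdq : N ∣ p ^ 2 - 1 := by
      have := dvd_card_sub_one_of_splits (p := p) hpN hN0 hsplN
      rwa [hcardF] at this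
    have hNE : N * p ^ e = 2 * k + 2 := by rw [mul_comm]; exact hNe
    exact ⟨N, e, hNdvdq, by omega⟩
  · rintro ⟨N, n, hNdvd, hk⟩
    have hq4 : 4 ≤ p ^ 2 := by nlinarith
    have hN0 : N ≠ 0 := by
      rintro rfl
      simp at hk
    have hMN : N * p ^ n = 2 * k + 2 := by
      have hpn : p ^ n ≠ 0 := pow_ne_zero _ (by omega)
      have : N * p ^ n ≠ 0 := by positivity
      omega
    have hsplN : ((X : Polynomial F) ^ N - C 1).Splits := by
      apply splits_X_pow_sub_one_of_dvd hN0
      rwa [hcardF]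
    have hchar : CharP (Polynomial F) p := by infer_instance
    have hpow : ((X : Polynomial F) ^ N - C 1) ^ p ^ n = X ^ (2 * k + 2) - C 1 := by
      rw [sub_pow_char_pow, ← pow_mul, hMN, map_one, one_pow]
    rw [← hpow]
    exact hsplN.pow _
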